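/- Assume all eight w_{ijk} are nonzero, and that F_{·1·} ≠ 0, F_{1··} ≠ 0 and H ≠ 0. Then the set S = {(x,y) ∈ ℂ² : f₀(x,y) = 0 and f₁(x,y) = 0} has exactly two elements. Moreover, S contains a point with x = 0 if and only if F_{0··} = 0, and S contains a point with y = 0 if and only if F_{·0·} = 0. -/

import Mathlib

theorem stmt_2 (w000 w001 w010 w011 w100 w101 w110 w111 : ℂ)
    (h000 : w000 ≠ 0) (h001 : w001 ≠ 0) (h010 : w010 ≠ 0) (h011 : w011 ≠ 0)
    (h100 : w100 ≠ 0) (h101 : w101 ≠ 0) (h110 : w110 ≠ 0) (h111 : w111 ≠ 0)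
    (hFd1 : w010 * w111 - w110 * w011 ≠ 0)
    (hF1d : w100 * w111 - w110 * w101 ≠ 0)
    (hH : ((w000 * w111 - w001 * w110) - (w010 * w101 - w011 * w100)) ^ 2
      - 4 * (w000 * w011 - w010 * w001) * (w100 * w111 - w110 * w101) ≠ 0)
    (S : Set (ℂ × ℂ))
    (hS : S = {p : ℂ × ℂ |
      w000 + w100 * p.1 + w010 * p.2 + w110 * p.1 * p.2 = 0 ∧
      w001 + w101 * p.1 + w011 * p.2 + w111 * p.1 * p.2 = 0}) :
    S.ncard = 2
    ∧ ((∃ p ∈ S, p.1 = 0) ↔ w000 * w011 - w010 * w001 = 0)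
    ∧ ((∃ p ∈ S, p.2 = 0) ↔ w000 * w101 - w100 * w001 = 0) := by
  obtain ⟨s, hs⟩ : ∃ s : ℂ, s ^ 2 =
      ((w000 * w111 - w001 * w110) - (w010 * w101 - w011 * w100)) ^ 2
      - 4 * (w000 * w011 - w010 * w001) * (w100 * w111 - w110 * w101) :=
    IsAlgClosed.exists_pow_nat_eq _ (by norm_num)
  have hs0 : s ≠ 0 := by
    intro h; apply hH; rw [← hs, h]; ring
  set A : ℂ := w101 * w110 - w100 * w111 with hAdef
  set D : ℂ := (w000 * w111 - w001 * w110) - (w010 * w101 - w011 * w100) with hDdef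
  set C : ℂ := w001 * w010 - w011 * w000 with hCdef
  have hA0 : A ≠ 0 := by
    intro h; apply hF1d; linear_combination -h
  have hs' : s ^ 2 = D ^ 2 - 4 * A * C := by
    rw [hs]; ring
  set x1 : ℂ := (D + s) / (2 * A) with hx1def
  set x2 : ℂ := (D - s) / (2 * A) with hx2def
  have hx12 : x1 ≠ x2 := by
    rw [hx1def, hx2def]
    intro h
    rw [div_eq_div_iff (by simpa using hA0) (by simpa using hA0)] at h
    apply hs0
    field_simp at h
    linear_combination h / 2
  have key : ∀ x : ℂ, A * x ^ 2 - D * x + C = 0 ↔ x = x1 ∨ x = x2 := by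
    intro x
    have hfact : A * x ^ 2 - D * x + C = A * (x - x1) * (x - x2) := by
      rw [hx1def, hx2def]
      field_simp
      linear_combination hs'
    rw [hfact]
    constructor
    · intro h
      rcases mul_eq_zero.mp h with h' | h'
      · rcases mul_eq_zero.mp h' with h'' | h''
        · exact absurd h'' hA0
        · exact Or.inl (by linear_combination h'')
      · exact Or.inr (by linear_combination h')
    · rintro (rfl | rfl) <;> ring
  -- the y-coordinate function
  set Y : ℂ → ℂ := fun x =>
    if w010 + w110 * x = 0 then -(w001 + w101 * x) / (w011 + w111 * x)
    else -(w000 + w100 * x) / (w010 + w110 * x) with hYdef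
  have hmem : ∀ x y : ℂ, (x, y) ∈ S ↔ (A * x ^ 2 - D * x + C = 0 ∧ y = Y x) := by
    intro x y
    rw [hS]
    simp only [Set.mem_setOf_eq]
    constructor
    · rintro ⟨hf0, hf1⟩
      have hq : A * x ^ 2 - D * x + C = 0 := by
        linear_combination (w010 + w110 * x) * hf1 - (w011 + w111 * x) * hf0
      refine ⟨hq, ?_⟩
      rw [hYdef]
      by_cases h : w010 + w110 * x = 0
      · have hne : w011 + w111 * x ≠ 0 := by
          intro h2; apply hFd1
          linear_combination w111 * h - w110 * h2
        simp only [h, if_true]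
        rw [eq_div_iff hne]
        linear_combination hf1
      · simp only [h, if_false]
        rw [eq_div_iff h]
        linear_combination hf0
    · rintro ⟨hq, rfl⟩
      rw [hYdef]
      by_cases h : w010 + w110 * x = 0
      · have hne : w011 + w111 * x ≠ 0 := by
          intro h2; apply hFd1
          linear_combination w111 * h - w110 * h2
        simp only [h, if_true]
        have hyv : (w011 + w111 * x) * (-(w001 + w101 * x) / (w011 + w111 * x))
            = -(w001 + w101 * x) := mul_div_cancel₀ _ hne
        have hx0 : w000 + w100 * x = 0 := by
          have h2 : (w011 + w111 * x) * (w000 + w100 * x) = 0 := by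
            linear_combination -hq + (w001 + w101 * x) * h
          rcases mul_eq_zero.mp h2 with h' | h'
          · exact absurd h' hne
          · exact h'
        constructor
        · linear_combination hx0 + (-(w001 + w101 * x) / (w011 + w111 * x)) * h
        · linear_combination hyv
      · simp only [h, if_false]
        have hyv : (w010 + w110 * x) * (-(w000 + w100 * x) / (w010 + w110 * x))
            = -(w000 + w100 * x) := mul_div_cancel₀ _ h
        constructor
        · linear_combination hyv
        · have h2 : (w010 + w110 * x) *
              (w001 + w101 * x + w011 * (-(w000 + w100 * x) / (w010 + w110 * x))
                + w111 * x * (-(w000 + w100 * x) / (w010 + w110 * x))) = 0 := by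
            linear_combination hq + (w011 + w111 * x) * hyv
          rcases mul_eq_zero.mp h2 with h' | h'
          · exact absurd h' h
          · exact h'
  have hSeq : S = {(x1, Y x1), (x2, Y x2)} := by
    ext ⟨x, y⟩
    rw [hmem x y, key x]
    simp only [Set.mem_insert_iff, Set.mem_singleton_iff, Prod.mk.injEq]
    constructor
    · rintro ⟨h | h, rfl⟩
      · exact Or.inl ⟨h, by rw [h]⟩
      · exact Or.inr ⟨h, by rw [h]⟩
    · rintro (⟨h1, h2⟩ | ⟨h1, h2⟩)
      · exact ⟨Or.inl h1, by rw [h1, h2]⟩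
      · exact ⟨Or.inr h1, by rw [h1, h2]⟩
  refine ⟨?_, ?_, ?_⟩
  · rw [hSeq]
    exact Set.ncard_pair (fun h => hx12 (congrArg Prod.fst h))
  · constructor
    · rintro ⟨⟨x, y⟩, hp, hx⟩
      simp only at hx
      subst hx
      have h2 := (hmem 0 y).mp hp
      linear_combination -h2.1
    · intro h
      exact ⟨(0, Y 0), (hmem 0 (Y 0)).mpr ⟨by linear_combination -h, rfl⟩, rfl⟩
  · constructor
    · rintro ⟨⟨x, y⟩, hp, hy⟩
      simp only at hy
      subst hy
      rw [hS] at hp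
      obtain ⟨hf0, hf1⟩ := hp
      simp only at hf0 hf1
      linear_combination w101 * hf0 - w100 * hf1
    · intro h
      refine ⟨(-(w000 / w100), 0), ?_, rfl⟩
      rw [hS]
      refine ⟨?_, ?_⟩
      · simp only
        field_simp
        ring
      · simp only
        field_simp
        linear_combination -h
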